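/- Let n, m ≥ 1, let u, v ∈ ℝⁿ be nonzero vectors with uᵀv ≠ 0, let λ ∈ ℝ with λ ≠ 0, let f₁,…,f_m ∈ ℝ and weights w₁,…,w_m ≥ 0. Consider the set S_sym = { |Σᵢ₌₁ᵐ fᵢ · (uᵀEᵢv)| / (|λ| · |uᵀv|) : E₁,…,E_m ∈ ℝ^{n×n} symmetric (Eᵢᵀ = Eᵢ) with ‖Eᵢ‖₂ ≤ wᵢ for all i }. Then the greatest element of S_sym equals κ = (Σᵢ₌₁ᵐ |fᵢ| wᵢ) · ‖u‖ · ‖v‖ / (|λ| · |uᵀv|); i.e., restricting to symmetric perturbations measured in the spectral norm does not change the eigenvalue condition number, and the maximum is attained (e.g. by Eᵢ = sign(fᵢ) wᵢ H with H the Householder reflector defined by u/‖u‖ − v/‖v‖). -/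

import Mathlib

open Matrix

noncomputable def e2norm {n : ℕ} (v : Fin n → ℝ) : ℝ := Real.sqrt (∑ i, v i ^ 2)

noncomputable def frobNorm {n m : ℕ} (M : Matrix (Fin n) (Fin m) ℝ) : ℝ :=
  Real.sqrt (∑ i, ∑ j, M i j ^ 2)

noncomputable def specNorm {n m : ℕ} (M : Matrix (Fin n) (Fin m) ℝ) : ℝ :=
  sSup ((fun x => e2norm (M.mulVec x)) '' {x : Fin m → ℝ | e2norm x = 1})

section aux
variable {n m : ℕ}

lemma e2norm_nonneg (x : Fin n → ℝ) : 0 ≤ e2norm x := Real.sqrt_nonneg _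

lemma e2norm_sq (x : Fin n → ℝ) : e2norm x ^ 2 = ∑ i, x i ^ 2 := by
  rw [e2norm, Real.sq_sqrt (by positivity)]

lemma e2norm_eq_sqrt_dot (x : Fin n → ℝ) : e2norm x = Real.sqrt (x ⬝ᵥ x) := by
  rw [e2norm]; congr 1; simp [dotProduct, sq]

lemma dot_self_eq (x : Fin n → ℝ) : x ⬝ᵥ x = e2norm x ^ 2 := by
  rw [e2norm_sq]; simp [dotProduct, sq]

lemma e2norm_pos {x : Fin n → ℝ} (hx : x ≠ 0) : 0 < e2norm x := by
  rcases (e2norm_nonneg x).lt_or_eq with h | h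
  · exact h
  · exfalso; apply hx
    have h2 : ∑ i, x i ^ 2 = 0 := by rw [← e2norm_sq, ← h]; ring
    funext i
    have hz := (Finset.sum_eq_zero_iff_of_nonneg (fun i _ => sq_nonneg (x i))).1 h2 i
      (Finset.mem_univ i)
    exact pow_eq_zero_iff (two_ne_zero) |>.1 hz

lemma e2norm_smul (c : ℝ) (x : Fin n → ℝ) : e2norm (c • x) = |c| * e2norm x := by
  rw [e2norm, e2norm]
  have : ∑ i, (c • x) i ^ 2 = c ^ 2 * ∑ i, x i ^ 2 := by
    rw [Finset.mul_sum]; apply Finset.sum_congr rfl; intro i _; simp [mul_pow]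
  rw [this, Real.sqrt_mul (sq_nonneg c), Real.sqrt_sq_eq_abs]

lemma abs_dot_le (x y : Fin n → ℝ) : |x ⬝ᵥ y| ≤ e2norm x * e2norm y := by
  rw [abs_le]
  constructor
  · have h := Real.sum_mul_le_sqrt_mul_sqrt Finset.univ (fun i => -x i) y
    simp only [neg_mul, Finset.sum_neg_distrib] at h
    have : ∑ i, (-x i) ^ 2 = ∑ i, x i ^ 2 := by simp
    rw [this] at h
    rw [dotProduct, e2norm, e2norm]
    linarith [h]
  · have h := Real.sum_mul_le_sqrt_mul_sqrt Finset.univ x y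
    rw [dotProduct, e2norm, e2norm]
    exact h

lemma e2norm_mulVec_le_frob (M : Matrix (Fin n) (Fin m) ℝ) (x : Fin m → ℝ) :
    e2norm (M.mulVec x) ≤ frobNorm M * e2norm x := by
  rw [e2norm, frobNorm, e2norm, ← Real.sqrt_mul (by positivity)]
  apply Real.sqrt_le_sqrt
  rw [Finset.sum_mul]
  apply Finset.sum_le_sum
  intro i _
  have := Finset.sum_mul_sq_le_sq_mul_sq Finset.univ (fun j => M i j) x
  simpa [Matrix.mulVec, dotProduct] using this

lemma specSet_bddAbove (M : Matrix (Fin n) (Fin m) ℝ) :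
    BddAbove ((fun x => e2norm (M.mulVec x)) '' {x : Fin m → ℝ | e2norm x = 1}) := by
  refine ⟨frobNorm M, ?_⟩
  rintro _ ⟨x, hx, rfl⟩
  calc e2norm (M.mulVec x) ≤ frobNorm M * e2norm x := e2norm_mulVec_le_frob M x
    _ = frobNorm M := by rw [Set.mem_setOf_eq.mp hx, mul_one]

lemma e2norm_mulVec_le (M : Matrix (Fin n) (Fin m) ℝ) (x : Fin m → ℝ) :
    e2norm (M.mulVec x) ≤ specNorm M * e2norm x := by
  by_cases hx : x = 0
  · subst hx
    simp only [Matrix.mulVec_zero]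
    have : e2norm (0 : Fin n → ℝ) = 0 := by simp [e2norm]
    have h0 : e2norm (0 : Fin m → ℝ) = 0 := by simp [e2norm]
    rw [this, h0, mul_zero]
  · have hc : 0 < e2norm x := e2norm_pos hx
    have hy : e2norm ((e2norm x)⁻¹ • x) = 1 := by
      rw [e2norm_smul, abs_of_pos (inv_pos.2 hc), inv_mul_cancel₀ hc.ne']
    have mem : e2norm (M.mulVec ((e2norm x)⁻¹ • x)) ∈
        (fun x => e2norm (M.mulVec x)) '' {x : Fin m → ℝ | e2norm x = 1} :=
      ⟨_, hy, rfl⟩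
    have hle := le_csSup (specSet_bddAbove M) mem
    rw [Matrix.mulVec_smul, e2norm_smul, abs_of_pos (inv_pos.2 hc)] at hle
    have := mul_le_mul_of_nonneg_right hle hc.le
    rwa [inv_mul_eq_div, div_mul_cancel₀ _ hc.ne'] at this

end aux

lemma householder {n : ℕ} (u v : Fin n → ℝ) (hu : u ≠ 0) (hv : v ≠ 0) :
    ∃ H : Matrix (Fin n) (Fin n) ℝ, Hᵀ = H ∧ (∀ x, e2norm (H.mulVec x) = e2norm x) ∧
      u ⬝ᵥ H.mulVec v = e2norm u * e2norm v := by
  set cu := e2norm u with hcu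
  set cv := e2norm v with hcv
  have hcu0 : 0 < cu := e2norm_pos hu
  have hcv0 : 0 < cv := e2norm_pos hv
  set a : Fin n → ℝ := cu⁻¹ • u - cv⁻¹ • v with ha
  by_cases haz : a = 0
  · refine ⟨1, Matrix.transpose_one, fun x => by rw [Matrix.one_mulVec], ?_⟩
    rw [Matrix.one_mulVec]
    have : cu⁻¹ • u = cv⁻¹ • v := by
      have := sub_eq_zero.mp haz
      exact this
    have hu' : u = (cu * cv⁻¹) • v := by
      have := congrArg (fun y => cu • y) this
      simpa [smul_smul, mul_inv_cancel₀ hcu0.ne', mul_comm] using this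
    rw [hu', smul_dotProduct, dot_self_eq, ← hcv]
    field_simp
    linear_combination (cv * cu) * mul_inv_cancel₀ hcv0.ne'
  · set s : ℝ := a ⬝ᵥ a with hs
    have hs0 : 0 < s := by
      rw [hs, dot_self_eq]
      exact pow_pos (e2norm_pos haz) 2
    set H : Matrix (Fin n) (Fin n) ℝ := 1 - (2 / s) • Matrix.vecMulVec a a with hH
    have hmv : ∀ x : Fin n → ℝ, H.mulVec x = x - ((2 / s) * (a ⬝ᵥ x)) • a := by
      intro x
      rw [hH, Matrix.sub_mulVec, Matrix.one_mulVec, Matrix.smul_mulVec]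
      congr 1
      funext i
      simp only [Matrix.mulVec, Matrix.vecMulVec_apply, dotProduct, Pi.smul_apply,
        smul_eq_mul, Finset.mul_sum]
      rw [Finset.sum_mul]
      apply Finset.sum_congr rfl
      intro j _
      ring
    refine ⟨H, ?_, ?_, ?_⟩
    · rw [hH]
      rw [Matrix.transpose_sub, Matrix.transpose_one, Matrix.transpose_smul]
      congr 1
      funext i j
      simp [Matrix.transpose_apply, Matrix.vecMulVec_apply, mul_comm]
    · intro x
      have key : (H.mulVec x) ⬝ᵥ (H.mulVec x) = x ⬝ᵥ x := by
        rw [hmv]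
        set t := (2 / s) * (a ⬝ᵥ x) with ht
        rw [sub_dotProduct, dotProduct_sub, dotProduct_sub,
          smul_dotProduct, dotProduct_smul, smul_dotProduct,
          dotProduct_smul]
        have hca : a ⬝ᵥ x = x ⬝ᵥ a := dotProduct_comm a x
        rw [ht, ← hs]
        field_simp
        ring_nf
        rw [hca]
        linear_combination (4 * (x ⬝ᵥ a) ^ 2 * s⁻¹) * mul_inv_cancel₀ hs0.ne'
      have h1 : e2norm (H.mulVec x) ^ 2 = e2norm x ^ 2 := by
        rw [← dot_self_eq, ← dot_self_eq, key]
      have := congrArg Real.sqrt h1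
      rwa [Real.sqrt_sq (e2norm_nonneg _), Real.sqrt_sq (e2norm_nonneg _)] at this
    · rw [hmv]
      have hav : a ⬝ᵥ v = cu⁻¹ * (u ⬝ᵥ v) - cv := by
        rw [ha, sub_dotProduct, smul_dotProduct, smul_dotProduct,
          dot_self_eq, ← hcv]
        field_simp
        linear_combination (u ⬝ᵥ v) * mul_inv_cancel₀ hcu0.ne' - cu * cv * mul_inv_cancel₀ hcv0.ne'
      have hua : u ⬝ᵥ a = cu - cv⁻¹ * (u ⬝ᵥ v) := by
        rw [ha, dotProduct_sub, dotProduct_smul, dotProduct_smul,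
          dot_self_eq, ← hcu]
        field_simp
        linear_combination cv * cu * mul_inv_cancel₀ hcu0.ne' - (u ⬝ᵥ v) * mul_inv_cancel₀ hcv0.ne'
      have hsval : s = 2 - 2 * (cu⁻¹ * cv⁻¹ * (u ⬝ᵥ v)) := by
        rw [hs, ha]
        simp only [sub_dotProduct, dotProduct_sub, smul_dotProduct,
          dotProduct_smul, smul_eq_mul, dotProduct_comm v u]
        rw [dot_self_eq, dot_self_eq, ← hcu, ← hcv]
        field_simp
        ring
      rw [dotProduct_sub, dotProduct_smul, smul_eq_mul, hav, hua]
      set d := u ⬝ᵥ v with hd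
      have hsne : s ≠ 0 := hs0.ne'
      have hprod : (cu⁻¹ * d - cv) * (cu - cv⁻¹ * d) = -(s / 2) * (cu * cv - d) := by
        rw [hsval]
        field_simp
        ring
      rw [mul_assoc, hprod]
      field_simp
      ring


lemma specNorm_smul_isometry {n : ℕ} (hn : 1 ≤ n) (c : ℝ) (H : Matrix (Fin n) (Fin n) ℝ)
    (hiso : ∀ x, e2norm (H.mulVec x) = e2norm x) : specNorm (c • H) = |c| := by
  set x0 : Fin n → ℝ := Pi.single ⟨0, hn⟩ 1 with hx0def
  have hx0 : e2norm x0 = 1 := by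
    rw [e2norm]
    have hsum : ∑ i, x0 i ^ 2 = 1 := by
      rw [hx0def, Finset.sum_eq_single (⟨0, hn⟩ : Fin n)]
      · simp
      · intro j _ hj; simp [Pi.single_apply, hj]
      · intro h; exact absurd (Finset.mem_univ _) h
    rw [hsum, Real.sqrt_one]
  have himg : (fun x => e2norm ((c • H).mulVec x)) '' {x : Fin n → ℝ | e2norm x = 1} = {|c|} := by
    ext y
    constructor
    · rintro ⟨x, hx, rfl⟩
      simp only [Set.mem_singleton_iff]
      rw [Matrix.smul_mulVec, e2norm_smul, hiso, Set.mem_setOf_eq.mp hx, mul_one]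
    · rintro rfl
      refine ⟨x0, hx0, ?_⟩
      show e2norm ((c • H).mulVec x0) = |c|
      rw [Matrix.smul_mulVec, e2norm_smul, hiso, hx0, mul_one]
  rw [specNorm, himg, csSup_singleton]

lemma mySelf_mul_sign (x : ℝ) : x * Real.sign x = |x| := by
  rcases lt_trichotomy x 0 with h | h | h
  · rw [Real.sign_of_neg h, abs_of_neg h]; ring
  · simp [h]
  · rw [Real.sign_of_pos h, abs_of_pos h]; ring

lemma abs_sign_le_one (x : ℝ) : |Real.sign x| ≤ 1 := by
  rcases Real.sign_apply_eq x with h | h | h <;> rw [h] <;> norm_num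

/-- restricting to symmetric perturbations measured in the
spectral norm does not change the eigenvalue condition number. -/
theorem symmetric_eigenvalue_condition_number_spectral
    {n m : ℕ} (hn : 1 ≤ n) (hm : 1 ≤ m)
    (u v : Fin n → ℝ) (hu : u ≠ 0) (hv : v ≠ 0) (huv : u ⬝ᵥ v ≠ 0)
    (lam : ℝ) (hlam : lam ≠ 0)
    (f w : Fin m → ℝ) (hw : ∀ i, 0 ≤ w i) :
    IsGreatest
      {s : ℝ | ∃ E : Fin m → Matrix (Fin n) (Fin n) ℝ,
        (∀ i, (E i)ᵀ = E i) ∧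
        (∀ i, specNorm (E i) ≤ w i) ∧
        s = |∑ i, f i * (u ⬝ᵥ (E i).mulVec v)| / (|lam| * |u ⬝ᵥ v|)}
      ((∑ i, |f i| * w i) * e2norm u * e2norm v / (|lam| * |u ⬝ᵥ v|)) := by
  obtain ⟨H, hHsym, hHiso, hHval⟩ := householder u v hu hv
  constructor
  · -- membership: attained by E i = (sign (f i) * w i) • H
    refine ⟨fun i => (Real.sign (f i) * w i) • H, ?_, ?_, ?_⟩
    · intro i
      rw [Matrix.transpose_smul, hHsym]
    · intro i
      rw [specNorm_smul_isometry hn _ _ hHiso, abs_mul, abs_of_nonneg (hw i)]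
      calc |Real.sign (f i)| * w i ≤ 1 * w i :=
            mul_le_mul_of_nonneg_right (abs_sign_le_one _) (hw i)
        _ = w i := one_mul _
    · have hsum : ∑ i, f i * (u ⬝ᵥ ((Real.sign (f i) * w i) • H).mulVec v)
          = (∑ i, |f i| * w i) * (e2norm u * e2norm v) := by
        rw [Finset.sum_mul]
        apply Finset.sum_congr rfl
        intro i _
        rw [Matrix.smul_mulVec, dotProduct_smul, smul_eq_mul, hHval]
        rw [← mySelf_mul_sign (f i)]
        ring
      have h1 : 0 ≤ ∑ i, |f i| * w i :=
        Finset.sum_nonneg fun i _ => mul_nonneg (abs_nonneg _) (hw i)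
      have h2 : (0:ℝ) ≤ (∑ i, |f i| * w i) * (e2norm u * e2norm v) :=
        mul_nonneg h1 (mul_nonneg (e2norm_nonneg u) (e2norm_nonneg v))
      rw [hsum, abs_of_nonneg h2]
      ring
  · -- upper bound
    rintro s ⟨E, hEsym, hEnorm, rfl⟩
    have hden : 0 < |lam| * |u ⬝ᵥ v| :=
      mul_pos (abs_pos.2 hlam) (abs_pos.2 huv)
    have hnum : |∑ i, f i * (u ⬝ᵥ (E i).mulVec v)|
        ≤ (∑ i, |f i| * w i) * e2norm u * e2norm v := by
      calc |∑ i, f i * (u ⬝ᵥ (E i).mulVec v)|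
          ≤ ∑ i, |f i * (u ⬝ᵥ (E i).mulVec v)| := Finset.abs_sum_le_sum_abs _ _
        _ ≤ ∑ i, |f i| * (w i * (e2norm u * e2norm v)) := by
            apply Finset.sum_le_sum
            intro i _
            rw [abs_mul]
            apply mul_le_mul_of_nonneg_left ?_ (abs_nonneg (f i))
            calc |u ⬝ᵥ (E i).mulVec v|
                ≤ e2norm u * e2norm ((E i).mulVec v) := abs_dot_le _ _
              _ ≤ e2norm u * (specNorm (E i) * e2norm v) :=
                  mul_le_mul_of_nonneg_left (e2norm_mulVec_le _ _) (e2norm_nonneg u)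
              _ ≤ e2norm u * (w i * e2norm v) := by
                  apply mul_le_mul_of_nonneg_left ?_ (e2norm_nonneg u)
                  exact mul_le_mul_of_nonneg_right (hEnorm i) (e2norm_nonneg v)
              _ = w i * (e2norm u * e2norm v) := by ring
        _ = (∑ i, |f i| * w i) * e2norm u * e2norm v := by
            rw [Finset.sum_mul, Finset.sum_mul]
            apply Finset.sum_congr rfl
            intro i _
            ring
    exact (div_le_div_iff_of_pos_right hden).mpr hnum
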